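/- Let A be an n×n complex matrix, u, v ∈ ℂⁿ, let m_A be the minimal polynomial of A, and let p_{uv} be the polynomial satisfying p_{uv}(λ) = v* m_A(λ)(λIₙ − A)⁻¹u outside the spectrum of A. Suppose ζ is a root of p_{uv} of multiplicity exactly k ≥ 1 and m_A(ζ) ≠ 0. Then v*(ζIₙ − A)^{−(j+1)}u = 0 for j = 0, 1, …, k−1 and v*(ζIₙ − A)^{−(k+1)}u ≠ 0. -/

import Mathlib

open Matrix Polynomial

private lemma dmv_add {n : ℕ} (v u : Fin n → ℂ) (M N : Matrix (Fin n) (Fin n) ℂ) :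
    v ⬝ᵥ (M + N).mulVec u = v ⬝ᵥ M.mulVec u + v ⬝ᵥ N.mulVec u := by
  rw [Matrix.add_mulVec, dotProduct_add]

private lemma dmv_smul {n : ℕ} (v u : Fin n → ℂ) (a : ℂ) (M : Matrix (Fin n) (Fin n) ℂ) :
    v ⬝ᵥ (a • M).mulVec u = a * (v ⬝ᵥ M.mulVec u) := by
  rw [Matrix.smul_mulVec, dotProduct_smul, smul_eq_mul]

private lemma dmv_sum {n : ℕ} (v u : Fin n → ℂ) (s : Finset ℕ)
    (f : ℕ → Matrix (Fin n) (Fin n) ℂ) :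
    v ⬝ᵥ (∑ m ∈ s, f m).mulVec u = ∑ m ∈ s, v ⬝ᵥ (f m).mulVec u := by
  classical
  induction s using Finset.induction_on with
  | empty => simp [Matrix.zero_mulVec]
  | @insert a s' h ih => rw [Finset.sum_insert h, Finset.sum_insert h, dmv_add, ih]

private lemma charpoly_eval {n : ℕ} (A : Matrix (Fin n) (Fin n) ℂ) (lam : ℂ) :
    A.charpoly.eval lam = (lam • (1 : Matrix (Fin n) (Fin n) ℂ) - A).det := by
  have hmap : (charmatrix A).map (evalRingHom lam) = lam • (1 : Matrix (Fin n) (Fin n) ℂ) - A := by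
    ext i j
    by_cases h : i = j <;>
      simp [charmatrix_apply, h, Matrix.one_apply, Matrix.smul_apply, Matrix.sub_apply,
        Matrix.diagonal_apply]
  rw [Matrix.charpoly, ← hmap]
  show (evalRingHom lam) (charmatrix A).det = _
  rw [RingHom.map_det]
  rfl

private lemma charmatrix_map_eval {n : ℕ} (A : Matrix (Fin n) (Fin n) ℂ) (lam : ℂ) :
    (charmatrix A).map (evalRingHom lam) = lam • (1 : Matrix (Fin n) (Fin n) ℂ) - A := by
  ext i j
  by_cases h : i = j <;>
    simp [charmatrix_apply, h, Matrix.one_apply, Matrix.smul_apply, Matrix.sub_apply,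
      Matrix.diagonal_apply]

private lemma unit_of_minpoly {n : ℕ} (A : Matrix (Fin n) (Fin n) ℂ) (lam : ℂ)
    (h : (minpoly ℂ A).eval lam ≠ 0) :
    IsUnit (lam • (1 : Matrix (Fin n) (Fin n) ℂ) - A) := by
  obtain ⟨g, hg⟩ := Polynomial.X_sub_C_dvd_sub_C_eval (a := lam) (p := minpoly ℂ A)
  have h2 := congrArg (Polynomial.aeval A) hg
  simp only [map_sub, minpoly.aeval, aeval_C, aeval_X, _root_.map_mul,
    Algebra.algebraMap_eq_smul_one] at h2
  have h3 : (lam • (1 : Matrix (Fin n) (Fin n) ℂ) - A) *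
      (((minpoly ℂ A).eval lam)⁻¹ • Polynomial.aeval A g) = 1 := by
    rw [Matrix.mul_smul, ← neg_sub A (lam • 1), neg_mul, ← h2]
    rw [zero_sub, neg_neg, smul_smul, inv_mul_cancel₀ h, one_smul]
  rw [Matrix.isUnit_iff_isUnit_det, isUnit_iff_ne_zero]
  exact Matrix.det_ne_zero_of_right_inverse h3

private lemma resolvent_expansion {n : ℕ} (A : Matrix (Fin n) (Fin n) ℂ) (ζ lam : ℂ) (k : ℕ)
    (hζ : IsUnit ((ζ • (1 : Matrix (Fin n) (Fin n) ℂ) - A)).det)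
    (hlam : IsUnit ((lam • (1 : Matrix (Fin n) (Fin n) ℂ) - A)).det) :
    (lam • (1 : Matrix (Fin n) (Fin n) ℂ) - A)⁻¹ =
      (∑ m ∈ Finset.range (k+1), (-(lam - ζ))^m • ((ζ • (1 : Matrix (Fin n) (Fin n) ℂ) - A)⁻¹)^(m+1))
      + (-(lam - ζ))^(k+1) • (((ζ • (1 : Matrix (Fin n) (Fin n) ℂ) - A)⁻¹)^(k+1) *
          (lam • (1 : Matrix (Fin n) (Fin n) ℂ) - A)⁻¹) := by
  set Z := ζ • (1 : Matrix (Fin n) (Fin n) ℂ) - A with hZ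
  set L := lam • (1 : Matrix (Fin n) (Fin n) ℂ) - A with hL
  set B := Z⁻¹ with hB
  set t := lam - ζ with ht
  have hZB : Z * B = 1 := Matrix.mul_nonsing_inv _ hζ
  have hBZ : B * Z = 1 := Matrix.nonsing_inv_mul _ hζ
  have hLinv : L * L⁻¹ = 1 := Matrix.mul_nonsing_inv _ hlam
  have hLZ : L = Z + t • 1 := by
    rw [hZ, hL, ht]; rw [sub_smul]; abel
  have hcommZL : L * Z = Z * L := by
    rw [hLZ, add_mul, mul_add, Matrix.smul_mul, Matrix.mul_smul, one_mul, mul_one]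
  have hcommLB : L * B = B * L := by
    calc L * B = 1 * (L * B) := (one_mul _).symm
    _ = B * Z * (L * B) := by rw [hBZ]
    _ = B * (Z * L) * B := by simp only [mul_assoc]
    _ = B * (L * Z) * B := by rw [hcommZL]
    _ = B * L * (Z * B) := by simp only [mul_assoc]
    _ = B * L := by rw [hZB, mul_one]
  have hcommLBk : L * B^(k+1) = B^(k+1) * L := (Commute.pow_right hcommLB (k+1))
  apply Matrix.inv_eq_right_inv
  have hZBpow : ∀ m : ℕ, Z * B^(m+1) = B^m := by
    intro m
    rw [pow_succ', ← mul_assoc, hZB, one_mul]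
  have hterm : ∀ m, L * ((-t)^m • B^(m+1)) = (-t)^m • B^m - (-t)^(m+1) • B^(m+1) := by
    intro m
    rw [Matrix.mul_smul, hLZ, add_mul, hZBpow, Matrix.smul_mul, one_mul, smul_add, smul_smul]
    have : (-t)^m * t = -((-t)^(m+1)) := by ring
    rw [this, neg_smul, sub_eq_add_neg]
  rw [mul_add, Finset.mul_sum]
  have hsum : ∑ m ∈ Finset.range (k+1), L * ((-t)^m • B^(m+1)) = 1 - (-t)^(k+1) • B^(k+1) := by
    calc ∑ m ∈ Finset.range (k+1), L * ((-t)^m • B^(m+1))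
        = ∑ m ∈ Finset.range (k+1), ((fun m => (-t)^m • B^m) m - (fun m => (-t)^m • B^m) (m+1)) := by
          exact Finset.sum_congr rfl fun m _ => hterm m
    _ = (-t)^0 • B^0 - (-t)^(k+1) • B^(k+1) := Finset.sum_range_sub' _ _
    _ = 1 - (-t)^(k+1) • B^(k+1) := by simp
  rw [hsum, Matrix.mul_smul, ← mul_assoc, hcommLBk, mul_assoc, hLinv, mul_one]
  abel

theorem stmt13 {n : ℕ} (A : Matrix (Fin n) (Fin n) ℂ) (u v : Fin n → ℂ)
    (p : Polynomial ℂ)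
    (hp : ∀ lam ∉ spectrum ℂ A,
      p.eval lam = (minpoly ℂ A).eval lam *
        (star v ⬝ᵥ (lam • (1 : Matrix (Fin n) (Fin n) ℂ) - A)⁻¹.mulVec u))
    (ζ : ℂ) (k : ℕ) (hk : 1 ≤ k)
    (hmult : p.rootMultiplicity ζ = k)
    (hm : (minpoly ℂ A).eval ζ ≠ 0) :
    (∀ j < k,
      star v ⬝ᵥ (((ζ • (1 : Matrix (Fin n) (Fin n) ℂ) - A)⁻¹) ^ (j + 1)).mulVec u = 0) ∧
    star v ⬝ᵥ (((ζ • (1 : Matrix (Fin n) (Fin n) ℂ) - A)⁻¹) ^ (k + 1)).mulVec u ≠ 0 := by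
  classical
  set χ := A.charpoly with hχdef
  set B := (ζ • (1 : Matrix (Fin n) (Fin n) ℂ) - A)⁻¹ with hBdef
  set c : ℕ → ℂ := fun j => star v ⬝ᵥ (B^(j+1)).mulVec u with hcdef
  -- spectrum characterization
  have hspec : ∀ lam : ℂ, lam ∉ spectrum ℂ A ↔
      IsUnit (lam • (1 : Matrix (Fin n) (Fin n) ℂ) - A) := by
    intro lam
    rw [spectrum.notMem_iff, Algebra.algebraMap_eq_smul_one]
  have hudet : ∀ lam : ℂ, IsUnit (lam • (1 : Matrix (Fin n) (Fin n) ℂ) - A) ↔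
      (lam • (1 : Matrix (Fin n) (Fin n) ℂ) - A).det ≠ 0 := by
    intro lam
    rw [Matrix.isUnit_iff_isUnit_det, isUnit_iff_ne_zero]
  -- ζ is not in the spectrum
  have hζu : IsUnit (ζ • (1 : Matrix (Fin n) (Fin n) ℂ) - A) := unit_of_minpoly A ζ hm
  have hζdet : IsUnit (ζ • (1 : Matrix (Fin n) (Fin n) ℂ) - A).det :=
    (Matrix.isUnit_iff_isUnit_det _).1 hζu
  have hχζ : χ.eval ζ ≠ 0 := by
    rw [hχdef, charpoly_eval]
    exact ((hudet ζ).1 hζu)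
  -- χ = minpoly * s
  obtain ⟨s, hs⟩ : minpoly ℂ A ∣ χ := A.minpoly_dvd_charpoly
  have hsζ : s.eval ζ ≠ 0 := by
    intro h0
    rw [hs, eval_mul, h0, mul_zero] at hχζ
    exact hχζ rfl
  have hs0 : s ≠ 0 := fun h => hsζ (by rw [h, eval_zero])
  have hp0 : p ≠ 0 := by
    intro h
    rw [h, rootMultiplicity_zero] at hmult
    omega
  set q := p * s with hqdef
  have hq0 : q ≠ 0 := mul_ne_zero hp0 hs0
  have hqmult : q.rootMultiplicity ζ = k := by
    rw [hqdef, rootMultiplicity_mul hq0, hmult,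
      rootMultiplicity_eq_zero (by simpa [Polynomial.IsRoot] using hsζ), add_zero]
  have hqe : ∀ lam : ℂ, lam ∉ spectrum ℂ A → q.eval lam =
      χ.eval lam * (star v ⬝ᵥ (lam • (1 : Matrix (Fin n) (Fin n) ℂ) - A)⁻¹.mulVec u) := by
    intro lam hlam
    rw [hqdef, eval_mul, hp lam hlam, hs, eval_mul]
    ring
  -- the polynomial R
  set Rp : Polynomial ℂ := ∑ i, ∑ j,
      C (star v i) * (((B^(k+1)).map C * adjugate (charmatrix A)) i j) * C (u j) with hRpdef
  have hadjmap : ∀ lam : ℂ, (adjugate (charmatrix A)).map (evalRingHom lam) =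
      adjugate (lam • (1 : Matrix (Fin n) (Fin n) ℂ) - A) := by
    intro lam
    have := (evalRingHom lam).map_adjugate (charmatrix A)
    rw [RingHom.mapMatrix_apply, RingHom.mapMatrix_apply] at this
    rw [this, charmatrix_map_eval]
  have hRpeval : ∀ lam : ℂ, Rp.eval lam =
      star v ⬝ᵥ ((B^(k+1) * adjugate (lam • (1 : Matrix (Fin n) (Fin n) ℂ) - A)).mulVec u) := by
    intro lam
    have hentry : ∀ i j, (((B^(k+1)).map C * adjugate (charmatrix A)) i j).eval lam =
        (B^(k+1) * adjugate (lam • (1 : Matrix (Fin n) (Fin n) ℂ) - A)) i j := by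
      intro i j
      rw [← hadjmap lam]
      simp [Matrix.mul_apply, eval_finset_sum, Matrix.map_apply]
    rw [hRpdef]
    simp only [eval_finset_sum, eval_mul, eval_C, hentry]
    simp only [dotProduct, Matrix.mulVec, Finset.mul_sum]
    exact Finset.sum_congr rfl fun i _ => Finset.sum_congr rfl fun j _ => by ring
  -- adjugate and inverse
  have hadjinv : ∀ lam : ℂ, lam ∉ spectrum ℂ A →
      adjugate (lam • (1 : Matrix (Fin n) (Fin n) ℂ) - A) =
        χ.eval lam • (lam • (1 : Matrix (Fin n) (Fin n) ℂ) - A)⁻¹ := by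
    intro lam hlam
    have hu := (hspec lam).1 hlam
    have hd := (Matrix.isUnit_iff_isUnit_det _).1 hu
    have h1 := Matrix.mul_adjugate (lam • (1 : Matrix (Fin n) (Fin n) ℂ) - A)
    have h2 := congrArg (fun M => (lam • (1 : Matrix (Fin n) (Fin n) ℂ) - A)⁻¹ * M) h1
    rw [← mul_assoc, Matrix.nonsing_inv_mul _ hd, one_mul, Matrix.mul_smul, mul_one] at h2
    rw [h2, hχdef, charpoly_eval]
  -- G
  set G : Polynomial ℂ := ∑ m ∈ Finset.range (k+1), C ((-1:ℂ)^m * c m) * (X - C ζ)^m with hGdef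
  -- the key polynomial identity
  have hkey : q = χ * G + C ((-1:ℂ)^(k+1)) * (X - C ζ)^(k+1) * Rp := by
    apply Polynomial.eq_of_infinite_eval_eq
    have hsub : (spectrum ℂ A)ᶜ ⊆ {x | q.eval x =
        (χ * G + C ((-1:ℂ)^(k+1)) * (X - C ζ)^(k+1) * Rp).eval x} := by
      intro lam hlam
      simp only [Set.mem_compl_iff] at hlam
      have hu := (hspec lam).1 hlam
      have hd := (Matrix.isUnit_iff_isUnit_det _).1 hu
      have hexp := resolvent_expansion A ζ lam k hζdet hd
      set t := lam - ζ with htdef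
      have hdot : star v ⬝ᵥ ((lam • (1 : Matrix (Fin n) (Fin n) ℂ) - A)⁻¹).mulVec u =
          (∑ m ∈ Finset.range (k+1), (-t)^m * c m) +
          (-t)^(k+1) * (star v ⬝ᵥ ((B^(k+1) *
            (lam • (1 : Matrix (Fin n) (Fin n) ℂ) - A)⁻¹)).mulVec u) := by
        conv_lhs => rw [hexp]
        rw [dmv_add, dmv_sum, dmv_smul]
        congr 1
        exact Finset.sum_congr rfl fun m _ => dmv_smul _ _ _ _
      have hBadj : star v ⬝ᵥ ((B^(k+1) *
            adjugate (lam • (1 : Matrix (Fin n) (Fin n) ℂ) - A)).mulVec u) =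
          χ.eval lam * (star v ⬝ᵥ ((B^(k+1) *
            (lam • (1 : Matrix (Fin n) (Fin n) ℂ) - A)⁻¹)).mulVec u) := by
        rw [hadjinv lam hlam, Matrix.mul_smul, dmv_smul]
      show q.eval lam = _
      rw [hqe lam hlam, hdot]
      simp only [eval_add, eval_mul, eval_pow, eval_sub, eval_C, eval_X, hRpeval, hBadj, hGdef,
        eval_finset_sum]
      simp only [← htdef]
      have hS : ∀ m ∈ Finset.range (k+1), (-t)^m * c m = (-1:ℂ)^m * c m * t^m := by
        intro m _
        rw [neg_pow]
        ring
      rw [Finset.sum_congr rfl hS, neg_pow]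
      ring
    have hcfin : Set.Finite (spectrum ℂ A) := by
      apply Set.Finite.subset (Polynomial.finite_setOf_isRoot (p := χ) (A.charpoly_monic.ne_zero))
      intro lam hlam
      have : ¬ IsUnit (lam • (1 : Matrix (Fin n) (Fin n) ℂ) - A) := by
        intro hu; exact ((hspec lam).2 hu) hlam
      have hdet0 : (lam • (1 : Matrix (Fin n) (Fin n) ℂ) - A).det = 0 := by
        by_contra h0
        exact this ((hudet lam).2 h0)
      show χ.IsRoot lam
      rw [Polynomial.IsRoot, hχdef, charpoly_eval, hdet0]
    exact Set.Infinite.mono hsub (Set.Finite.infinite_compl hcfin)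
  -- extraction of coefficients
  have hdvd : (X - C ζ)^k ∣ q := hqmult ▸ q.pow_rootMultiplicity_dvd ζ
  have hnotdvdχ : ¬ (X - C ζ) ∣ χ := by
    rw [Polynomial.dvd_iff_isRoot]
    exact hχζ
  have hdvd2 : (X - C ζ)^k ∣ χ * G := by
    have h1 : (X - C ζ)^k ∣ C ((-1:ℂ)^(k+1)) * (X - C ζ)^(k+1) * Rp :=
      Dvd.dvd.mul_right (Dvd.dvd.mul_left (pow_dvd_pow _ (by omega)) _) _
    have := dvd_sub hdvd h1
    rw [hkey] at this
    simpa using this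
  have hGdvd : (X - C ζ)^k ∣ G :=
    (Polynomial.prime_X_sub_C ζ).pow_dvd_of_dvd_mul_left k hnotdvdχ hdvd2
  -- compose with X + C ζ
  have hGcomp : G.comp (X + C ζ) = ∑ m ∈ Finset.range (k+1), C ((-1:ℂ)^m * c m) * X^m := by
    rw [hGdef, Polynomial.sum_comp]
    refine Finset.sum_congr rfl fun m _ => ?_
    rw [Polynomial.mul_comp, Polynomial.C_comp, Polynomial.pow_comp, Polynomial.sub_comp,
      Polynomial.X_comp, Polynomial.C_comp]
    simp
  have hXdvd : X^k ∣ G.comp (X + C ζ) := by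
    obtain ⟨h, hh⟩ := hGdvd
    refine ⟨h.comp (X + C ζ), ?_⟩
    rw [hh, Polynomial.mul_comp, Polynomial.pow_comp, Polynomial.sub_comp, Polynomial.X_comp,
      Polynomial.C_comp]
    simp
  have hcoeff : ∀ d, d ≤ k → (G.comp (X + C ζ)).coeff d = (-1:ℂ)^d * c d := by
    intro d hd
    rw [hGcomp, Polynomial.finset_sum_coeff]
    rw [Finset.sum_eq_single d]
    · rw [Polynomial.coeff_C_mul, Polynomial.coeff_X_pow, if_pos rfl, mul_one]
    · intro m _ hm
      rw [Polynomial.coeff_C_mul, Polynomial.coeff_X_pow, if_neg (fun h => hm h.symm), mul_zero]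
    · intro habs
      exact absurd (Finset.mem_range.2 (by omega)) habs
  have hczero : ∀ j, j < k → c j = 0 := by
    intro j hj
    have h0 := Polynomial.X_pow_dvd_iff.1 hXdvd j hj
    rw [hcoeff j (le_of_lt hj)] at h0
    have : ((-1:ℂ)^j) ≠ 0 := by
      apply pow_ne_zero; norm_num
    field_simp at h0
    exact (mul_eq_zero.1 h0).resolve_left this
  refine ⟨fun j hj => hczero j hj, ?_⟩
  intro hck
  -- c k = 0 leads to G = 0 and contradiction with root multiplicity
  have hG0 : G = 0 := by
    rw [hGdef]
    apply Finset.sum_eq_zero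
    intro m hm
    rw [Finset.mem_range] at hm
    have : c m = 0 := by
      rcases Nat.lt_or_ge m k with h | h
      · exact hczero m h
      · have : m = k := by omega
        rw [this]; exact hck
    rw [this, mul_zero, map_zero, zero_mul]
  have hq1 : (X - C ζ)^(k+1) ∣ q := by
    rw [hkey, hG0, mul_zero, zero_add]
    exact Dvd.dvd.mul_right (Dvd.dvd.mul_left dvd_rfl _) _
  have := Polynomial.pow_rootMultiplicity_not_dvd hq0 ζ
  rw [hqmult] at this
  exact this hq1
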